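/- Let q be a prime power, J ⊆ Φ⁺ closed, and A ∈ V_J. Then |O_A^r| = |O_A^l|, and the numbers of right and of left U_J-orbits contained in O_A^bi coincide. Moreover there exists κ ∈ ℕ such that ℂO_A^bi ≅ ℂO_A^r ⊕ ⋯ ⊕ ℂO_A^r (κ copies) as right ℂU_J-modules, and one has |O_A^bi| = |O_A^r|·|O_A^l| / |O_A^r ∩ O_A^l| = |O_A^r|² / |O_A^r ∩ O_A^l| and κ = |O_A^r| / |O_A^r ∩ O_A^l|. -/

import Mathlib

open Matrix
open scoped Classical

noncomputable section

variable {F : Type} [Field F] [Fintype F] {n : ℕ}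

/-- The pattern subgroup U_J ⊆ U_n(q): unitriangular matrices supported (off the diagonal)
on J. -/
def patternU (J : Set (Fin n × Fin n)) : Set (Matrix (Fin n) (Fin n) F) :=
  {u | (∀ i, u i i = 1) ∧ ∀ i j, i ≠ j → (i, j) ∉ J → u i j = 0}

/-- V_J = {A ∈ M_n(q) : A_{ij} = 0 unless (i,j) ∈ J}. -/
def patternV (J : Set (Fin n × Fin n)) : Set (Matrix (Fin n) (Fin n) F) :=
  {A | ∀ i j, (i, j) ∉ J → A i j = 0}

/-- The natural projection π_J : M_n(q) → V_J. -/
def projJ (J : Set (Fin n × Fin n)) (B : Matrix (Fin n) (Fin n) F) :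
    Matrix (Fin n) (Fin n) F :=
  Matrix.of fun i j => if (i, j) ∈ J then B i j else 0

/-- The pairing A*(B) = Σ_{i,j} A_{ij} B_{ij}; for A supported on J this is the linear
form A* = Σ_{(i,j)∈J} A_{ij} ε_{ij} evaluated at B. -/
def dpair (A B : Matrix (Fin n) (Fin n) F) : F :=
  ∑ i, ∑ j, A i j * B i j

/-- The right orbit O_A^r = [A].U_J on the level of matrices: [A].u = [π_J(A u^{−t})]. -/
def orbR (J : Set (Fin n × Fin n)) (A : Matrix (Fin n) (Fin n) F) :
    Set (Matrix (Fin n) (Fin n) F) :=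
  {B | ∃ u ∈ patternU J, B = projJ J (A * (u⁻¹)ᵀ)}

/-- The left orbit O_A^l = U_J.[A] on the level of matrices: u.[A] = [π_J(u^{−t} A)]. -/
def orbL (J : Set (Fin n × Fin n)) (A : Matrix (Fin n) (Fin n) F) :
    Set (Matrix (Fin n) (Fin n) F) :=
  {B | ∃ u ∈ patternU J, B = projJ J ((u⁻¹)ᵀ * A)}

/-- The biorbit O_A^bi = U_J.[A].U_J on the level of matrices. -/
def orbBi (J : Set (Fin n × Fin n)) (A : Matrix (Fin n) (Fin n) F) :
    Set (Matrix (Fin n) (Fin n) F) :=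
  {B | ∃ u ∈ patternU J, ∃ v ∈ patternU J, B = projJ J ((u⁻¹)ᵀ * projJ J (A * (v⁻¹)ᵀ))}

/-- The character of U_J afforded by the monomial right orbit module ℂO_A^r (with respect to
the nontrivial character θ of (𝔽_q,+)): the trace of g on the monomial basis
{[B] : B ∈ O_A^r}, where [B]g = [B](g⁻¹ − E)·[B].g, so that the diagonal entry at [B] is
θ(B*(g⁻¹ − E)) if [B].g = [B] and 0 otherwise. -/
def rcharFn (J : Set (Fin n × Fin n)) (θ : AddChar F ℂ)
    (A g : Matrix (Fin n) (Fin n) F) : ℂ :=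
  ∑ᶠ B ∈ orbR J A, if projJ J (B * (g⁻¹)ᵀ) = B then θ (dpair B (g⁻¹ - 1)) else 0

/-- The character of U_J afforded by the monomial left orbit module ℂO_A^l. -/
def lcharFn (J : Set (Fin n × Fin n)) (θ : AddChar F ℂ)
    (A g : Matrix (Fin n) (Fin n) F) : ℂ :=
  ∑ᶠ B ∈ orbL J A, if projJ J ((g⁻¹)ᵀ * B) = B then θ (dpair B (g⁻¹ - 1)) else 0

/-- The character of U_J afforded by the biorbit span ℂO_A^bi regarded as a right
ℂU_J-module. -/
def bcharFn (J : Set (Fin n × Fin n)) (θ : AddChar F ℂ)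
    (A g : Matrix (Fin n) (Fin n) F) : ℂ :=
  ∑ᶠ B ∈ orbBi J A, if projJ J (B * (g⁻¹)ᵀ) = B then θ (dpair B (g⁻¹ - 1)) else 0

set_option linter.unusedSectionVars false
set_option linter.unusedVariables false
section Basic
variable (J : Set (Fin n × Fin n))

lemma projJ_apply (B : Matrix (Fin n) (Fin n) F) (i j : Fin n) :
    projJ J B i j = if (i, j) ∈ J then B i j else 0 := rfl

lemma projJ_mem (B : Matrix (Fin n) (Fin n) F) : projJ J B ∈ patternV J := by
  intro i j hij; simp [projJ_apply, hij]

lemma projJ_of_mem {B : Matrix (Fin n) (Fin n) F} (hB : B ∈ patternV J) : projJ J B = B := by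
  ext i j
  by_cases h : (i, j) ∈ J <;> simp [projJ_apply, h]
  exact (hB i j h).symm

lemma projJ_add (B C : Matrix (Fin n) (Fin n) F) :
    projJ J (B + C) = projJ J B + projJ J C := by
  ext i j; by_cases h : (i, j) ∈ J <;> simp [projJ_apply, h]

lemma projJ_sub (B C : Matrix (Fin n) (Fin n) F) :
    projJ J (B - C) = projJ J B - projJ J C := by
  ext i j; by_cases h : (i, j) ∈ J <;> simp [projJ_apply, h]

variable {J}

lemma patternV_neg {N : Matrix (Fin n) (Fin n) F} (hN : N ∈ patternV J) : -N ∈ patternV J := by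
  intro i j h; simp [hN i j h]

lemma patternU_one : (1 : Matrix (Fin n) (Fin n) F) ∈ patternU J := by
  constructor
  · intro i; simp
  · intro i j hij _; simp [Matrix.one_apply, hij]

lemma patternU_sub_one {u : Matrix (Fin n) (Fin n) F} (hu : u ∈ patternU J) :
    u - 1 ∈ patternV J := by
  intro i j h
  by_cases hij : i = j
  · subst hij; simp [hu.1 i]
  · simp [hu.2 i j hij h, Matrix.one_apply, hij]

lemma patternV_add_one {N : Matrix (Fin n) (Fin n) F}
    (hΦ : ∀ p ∈ J, p.1 < p.2) (hN : N ∈ patternV J) :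
    1 + N ∈ patternU J := by
  constructor
  · intro i
    have : (i, i) ∉ J := fun h => lt_irrefl _ (hΦ _ h)
    simp [hN i i this]
  · intro i j hij h
    simp [Matrix.one_apply, hij, hN i j h]

lemma patternU_mul (hcl : ∀ i j k : Fin n, (i, j) ∈ J → (j, k) ∈ J → (i, k) ∈ J)
    (hΦ : ∀ p ∈ J, p.1 < p.2)
    {u v : Matrix (Fin n) (Fin n) F} (hu : u ∈ patternU J) (hv : v ∈ patternU J) :
    u * v ∈ patternU J := by
  constructor
  · intro i
    rw [Matrix.mul_apply]
    rw [Finset.sum_eq_single i]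
    · simp [hu.1, hv.1]
    · intro k _ hk
      by_cases h1 : (i, k) ∈ J
      · by_cases h2 : (k, i) ∈ J
        · exact absurd (lt_trans (hΦ _ h1) (hΦ _ h2)) (lt_irrefl _)
        · simp [hv.2 k i hk h2]
      · simp [hu.2 i k (Ne.symm hk) h1]
    · simp
  · intro i j hij h
    rw [Matrix.mul_apply]
    apply Finset.sum_eq_zero
    intro k _
    rcases eq_or_ne i k with rfl | hik
    · simp [hv.2 i j hij h]
    · by_cases h1 : (i, k) ∈ J
      · rcases eq_or_ne k j with rfl | hkj
        · exact absurd h1 h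
        · by_cases h2 : (k, j) ∈ J
          · exact absurd (hcl i k j h1 h2) h
          · simp [hv.2 k j hkj h2]
      · simp [hu.2 i k hik h1]

end Basic
section Inv
variable {J : Set (Fin n × Fin n)}

lemma patternV_pow_supp (hcl : ∀ i j k : Fin n, (i, j) ∈ J → (j, k) ∈ J → (i, k) ∈ J)
    {N : Matrix (Fin n) (Fin n) F} (hN : N ∈ patternV J) :
    ∀ k, N ^ (k + 1) ∈ patternV J := by
  intro k
  induction k with
  | zero => simpa using hN
  | succ k ih =>
    intro i j h
    rw [pow_succ, Matrix.mul_apply]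
    apply Finset.sum_eq_zero
    intro m _
    by_cases h1 : (i, m) ∈ J
    · by_cases h2 : (m, j) ∈ J
      · exact absurd (hcl i m j h1 h2) h
      · simp [hN m j h2]
    · simp [ih i m h1]

lemma patternV_pow_lt (hΦ : ∀ p ∈ J, p.1 < p.2)
    {N : Matrix (Fin n) (Fin n) F} (hN : N ∈ patternV J) :
    ∀ k (i j : Fin n), (N ^ k) i j ≠ 0 → (i : ℕ) + k ≤ (j : ℕ) := by
  intro k
  induction k with
  | zero =>
    intro i j h
    rw [pow_zero] at h
    by_cases hij : i = j
    · subst hij; simp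
    · simp [Matrix.one_apply, hij] at h
  | succ k ih =>
    intro i j h
    rw [pow_succ, Matrix.mul_apply] at h
    obtain ⟨m, _, hm⟩ := Finset.exists_ne_zero_of_sum_ne_zero h
    have h1 : (N ^ k) i m ≠ 0 := fun hz => hm (by simp [hz])
    have h2 : N m j ≠ 0 := fun hz => hm (by simp [hz])
    have hmJ : (m, j) ∈ J := by
      by_contra hc; exact h2 (hN m j hc)
    have h3 : (m : ℕ) < (j : ℕ) := Fin.lt_iff_val_lt_val.mp (hΦ (m, j) hmJ)
    have := ih i m h1
    omega

lemma patternV_pow_nilpotent (hΦ : ∀ p ∈ J, p.1 < p.2)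
    {N : Matrix (Fin n) (Fin n) F} (hN : N ∈ patternV J) : N ^ n = 0 := by
  ext i j
  by_contra h
  have := patternV_pow_lt hΦ hN n i j (by simpa using h)
  have : (j : ℕ) < n := j.isLt
  omega

lemma patternU_inv (hΦ : ∀ p ∈ J, p.1 < p.2)
    (hcl : ∀ i j k : Fin n, (i, j) ∈ J → (j, k) ∈ J → (i, k) ∈ J)
    {u : Matrix (Fin n) (Fin n) F} (hu : u ∈ patternU J) :
    u⁻¹ ∈ patternU J ∧ u * u⁻¹ = 1 ∧ u⁻¹ * u = 1 := by
  set N : Matrix (Fin n) (Fin n) F := u - 1 with hNdef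
  have hN : N ∈ patternV J := patternU_sub_one hu
  have hNneg : (-N) ∈ patternV J := patternV_neg hN
  set v : Matrix (Fin n) (Fin n) F := ∑ i ∈ Finset.range n, (-N) ^ i with hvdef
  have hgeom : v * ((-N) - 1) = (-N) ^ n - 1 := geom_sum_mul (-N) n
  have hnil : (-N) ^ n = 0 := patternV_pow_nilpotent hΦ hNneg
  have hvu : v * u = 1 := by
    have h1 : (-N) - 1 = -u := by rw [hNdef]; abel
    rw [h1, hnil, zero_sub, Matrix.mul_neg] at hgeom
    have := neg_injective hgeom
    exact this
  have huv : u * v = 1 := mul_eq_one_comm.mpr hvu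
  have hinv : u⁻¹ = v := Matrix.inv_eq_right_inv huv
  have hvU : v ∈ patternU J := by
    constructor
    · intro i
      rw [hvdef]
      simp only [Matrix.sum_apply]
      rw [Finset.sum_eq_single 0]
      · simp
      · intro k hk hk0
        by_contra hc
        have := patternV_pow_lt hΦ hNneg k i i (by simpa using hc)
        omega
      · intro h; exact absurd (Finset.mem_range.mpr i.pos) h
    · intro i j hij h
      rw [hvdef]
      simp only [Matrix.sum_apply]
      apply Finset.sum_eq_zero
      intro k hk
      rcases k with _ | k'
      · simp [Matrix.one_apply, hij]
      · exact patternV_pow_supp hcl hNneg k' i j h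
  rw [hinv]
  exact ⟨hvU, huv, hvu⟩

end Inv
section Act
variable {J : Set (Fin n × Fin n)}

/-- right action: ract u B = π(B uᵀ). -/
def ract (J : Set (Fin n × Fin n)) (u B : Matrix (Fin n) (Fin n) F) :
    Matrix (Fin n) (Fin n) F := projJ J (B * uᵀ)

/-- left action: lact u B = π(uᵀ B). -/
def lact (J : Set (Fin n × Fin n)) (u B : Matrix (Fin n) (Fin n) F) :
    Matrix (Fin n) (Fin n) F := projJ J (uᵀ * B)

lemma proj_absorb_r (hcl : ∀ i j k : Fin n, (i, j) ∈ J → (j, k) ∈ J → (i, k) ∈ J)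
    {u : Matrix (Fin n) (Fin n) F} (hu : u ∈ patternU J) (X : Matrix (Fin n) (Fin n) F) :
    projJ J (projJ J X * uᵀ) = projJ J (X * uᵀ) := by
  ext i j
  by_cases h : (i, j) ∈ J
  · simp only [projJ_apply, h, if_true, Matrix.mul_apply, Matrix.transpose_apply]
    apply Finset.sum_congr rfl
    intro k _
    by_cases hik : (i, k) ∈ J
    · simp [projJ_apply, hik]
    · rcases eq_or_ne j k with rfl | hjk
      · exact absurd h hik
      · by_cases hjkJ : (j, k) ∈ J
        · exact absurd (hcl i j k h hjkJ) hik
        · simp [projJ_apply, hik, hu.2 j k hjk hjkJ]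
  · simp [projJ_apply, h]

lemma proj_absorb_l (hcl : ∀ i j k : Fin n, (i, j) ∈ J → (j, k) ∈ J → (i, k) ∈ J)
    {u : Matrix (Fin n) (Fin n) F} (hu : u ∈ patternU J) (X : Matrix (Fin n) (Fin n) F) :
    projJ J (uᵀ * projJ J X) = projJ J (uᵀ * X) := by
  ext i j
  by_cases h : (i, j) ∈ J
  · simp only [projJ_apply, h, if_true, Matrix.mul_apply, Matrix.transpose_apply]
    apply Finset.sum_congr rfl
    intro k _
    by_cases hkj : (k, j) ∈ J
    · simp [projJ_apply, hkj]
    · rcases eq_or_ne k i with rfl | hki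
      · exact absurd h hkj
      · by_cases hkiJ : (k, i) ∈ J
        · exact absurd (hcl k i j hkiJ h) hkj
        · simp [projJ_apply, hkj, hu.2 k i hki hkiJ]
  · simp [projJ_apply, h]

variable (hΦ : ∀ p ∈ J, p.1 < p.2)
    (hcl : ∀ i j k : Fin n, (i, j) ∈ J → (j, k) ∈ J → (i, k) ∈ J)

lemma ract_mem (u B : Matrix (Fin n) (Fin n) F) : ract J u B ∈ patternV J := projJ_mem J _

lemma lact_mem (u B : Matrix (Fin n) (Fin n) F) : lact J u B ∈ patternV J := projJ_mem J _

lemma ract_one {B : Matrix (Fin n) (Fin n) F} (hB : B ∈ patternV J) : ract J 1 B = B := by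
  rw [ract, Matrix.transpose_one, Matrix.mul_one, projJ_of_mem J hB]

lemma lact_one {B : Matrix (Fin n) (Fin n) F} (hB : B ∈ patternV J) : lact J 1 B = B := by
  rw [lact, Matrix.transpose_one, Matrix.one_mul, projJ_of_mem J hB]

include hcl in
lemma ract_ract {u v : Matrix (Fin n) (Fin n) F} (hu : u ∈ patternU J) (_ : v ∈ patternU J)
    (B : Matrix (Fin n) (Fin n) F) : ract J u (ract J v B) = ract J (u * v) B := by
  rw [ract, ract, ract, proj_absorb_r hcl hu, Matrix.transpose_mul, ← Matrix.mul_assoc]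

include hcl in
lemma lact_lact {u v : Matrix (Fin n) (Fin n) F} (hu : u ∈ patternU J) (_ : v ∈ patternU J)
    (B : Matrix (Fin n) (Fin n) F) : lact J u (lact J v B) = lact J (v * u) B := by
  rw [lact, lact, lact, proj_absorb_l hcl hu, Matrix.transpose_mul, Matrix.mul_assoc]

include hcl in
lemma lact_ract_comm {u v : Matrix (Fin n) (Fin n) F} (hu : u ∈ patternU J)
    (hv : v ∈ patternU J) (B : Matrix (Fin n) (Fin n) F) :
    lact J u (ract J v B) = ract J v (lact J u B) := by
  rw [lact, ract, proj_absorb_l hcl hu, ract, lact, proj_absorb_r hcl hv, Matrix.mul_assoc]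

include hΦ hcl in
lemma lact_cancel {u : Matrix (Fin n) (Fin n) F} (hu : u ∈ patternU J)
    {B : Matrix (Fin n) (Fin n) F} (hB : B ∈ patternV J) :
    lact J u⁻¹ (lact J u B) = B := by
  obtain ⟨hui, hu1, hu2⟩ := patternU_inv hΦ hcl hu
  rw [lact_lact hcl hui hu, hu1, lact_one hB]

include hΦ hcl in
lemma ract_cancel {u : Matrix (Fin n) (Fin n) F} (hu : u ∈ patternU J)
    {B : Matrix (Fin n) (Fin n) F} (hB : B ∈ patternV J) :
    ract J u⁻¹ (ract J u B) = B := by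
  obtain ⟨hui, hu1, hu2⟩ := patternU_inv hΦ hcl hu
  rw [ract_ract hcl hui hu, hu2, ract_one hB]

include hΦ hcl in
lemma lact_injOn {u : Matrix (Fin n) (Fin n) F} (hu : u ∈ patternU J) :
    Set.InjOn (lact J u) (patternV J) := by
  intro B hB C hC h
  have := congrArg (lact J u⁻¹) h
  rwa [lact_cancel hΦ hcl hu hB, lact_cancel hΦ hcl hu hC] at this

include hΦ hcl in
lemma ract_injOn {u : Matrix (Fin n) (Fin n) F} (hu : u ∈ patternU J) :
    Set.InjOn (ract J u) (patternV J) := by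
  intro B hB C hC h
  have := congrArg (ract J u⁻¹) h
  rwa [ract_cancel hΦ hcl hu hB, ract_cancel hΦ hcl hu hC] at this

end Act
section Orb
variable {J : Set (Fin n × Fin n)}

def rorb (J : Set (Fin n × Fin n)) (B : Matrix (Fin n) (Fin n) F) :
    Set (Matrix (Fin n) (Fin n) F) := {C | ∃ u ∈ patternU J, C = ract J u B}

def lorb (J : Set (Fin n × Fin n)) (B : Matrix (Fin n) (Fin n) F) :
    Set (Matrix (Fin n) (Fin n) F) := {C | ∃ u ∈ patternU J, C = lact J u B}

def biorb (J : Set (Fin n × Fin n)) (A : Matrix (Fin n) (Fin n) F) :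
    Set (Matrix (Fin n) (Fin n) F) :=
  {C | ∃ u ∈ patternU J, ∃ v ∈ patternU J, C = lact J u (ract J v A)}

variable (hΦ : ∀ p ∈ J, p.1 < p.2)
    (hcl : ∀ i j k : Fin n, (i, j) ∈ J → (j, k) ∈ J → (i, k) ∈ J)

include hΦ hcl

lemma orbR_eq (A : Matrix (Fin n) (Fin n) F) : orbR J A = rorb J A := by
  ext B
  constructor
  · rintro ⟨u, hu, rfl⟩
    exact ⟨u⁻¹, (patternU_inv hΦ hcl hu).1, rfl⟩
  · rintro ⟨u, hu, rfl⟩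
    obtain ⟨hui, hu1, _⟩ := patternU_inv hΦ hcl hu
    refine ⟨u⁻¹, hui, ?_⟩
    rw [Matrix.inv_eq_right_inv ((mul_eq_one_comm).mpr hu1)]
    rfl

lemma orbL_eq (A : Matrix (Fin n) (Fin n) F) : orbL J A = lorb J A := by
  ext B
  constructor
  · rintro ⟨u, hu, rfl⟩
    exact ⟨u⁻¹, (patternU_inv hΦ hcl hu).1, rfl⟩
  · rintro ⟨u, hu, rfl⟩
    obtain ⟨hui, hu1, _⟩ := patternU_inv hΦ hcl hu
    refine ⟨u⁻¹, hui, ?_⟩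
    rw [Matrix.inv_eq_right_inv ((mul_eq_one_comm).mpr hu1)]
    rfl

lemma orbBi_eq (A : Matrix (Fin n) (Fin n) F) : orbBi J A = biorb J A := by
  ext B
  constructor
  · rintro ⟨u, hu, v, hv, rfl⟩
    exact ⟨u⁻¹, (patternU_inv hΦ hcl hu).1, v⁻¹, (patternU_inv hΦ hcl hv).1, rfl⟩
  · rintro ⟨u, hu, v, hv, rfl⟩
    obtain ⟨hui, hu1, _⟩ := patternU_inv hΦ hcl hu
    obtain ⟨hvi, hv1, _⟩ := patternU_inv hΦ hcl hv
    refine ⟨u⁻¹, hui, v⁻¹, hvi, ?_⟩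
    rw [Matrix.inv_eq_right_inv ((mul_eq_one_comm).mpr hu1),
      Matrix.inv_eq_right_inv ((mul_eq_one_comm).mpr hv1)]
    rfl

variable {A : Matrix (Fin n) (Fin n) F} (hA : A ∈ patternV J)

lemma rorb_subset_V (B : Matrix (Fin n) (Fin n) F) : rorb J B ⊆ patternV J := by
  rintro C ⟨u, hu, rfl⟩; exact ract_mem u B

lemma lorb_subset_V (B : Matrix (Fin n) (Fin n) F) : lorb J B ⊆ patternV J := by
  rintro C ⟨u, hu, rfl⟩; exact lact_mem u B

include hA in
lemma mem_rorb_self : A ∈ rorb J A := ⟨1, patternU_one, (ract_one hA).symm⟩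

include hA in
lemma mem_lorb_self : A ∈ lorb J A := ⟨1, patternU_one, (lact_one hA).symm⟩

include hA in
lemma rorb_ract {v : Matrix (Fin n) (Fin n) F} (hv : v ∈ patternU J) :
    rorb J (ract J v A) = rorb J A := by
  ext C
  constructor
  · rintro ⟨w, hw, rfl⟩
    exact ⟨w * v, patternU_mul hcl hΦ hw hv, ract_ract hcl hw hv A⟩
  · rintro ⟨w, hw, rfl⟩
    obtain ⟨hvi, hv1, hv2⟩ := patternU_inv hΦ hcl hv
    refine ⟨w * v⁻¹, patternU_mul hcl hΦ hw hvi, ?_⟩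
    rw [ract_ract hcl (patternU_mul hcl hΦ hw hvi) hv, Matrix.mul_assoc, hv2, Matrix.mul_one]

include hA in
lemma lorb_lact {v : Matrix (Fin n) (Fin n) F} (hv : v ∈ patternU J) :
    lorb J (lact J v A) = lorb J A := by
  ext C
  constructor
  · rintro ⟨w, hw, rfl⟩
    exact ⟨v * w, patternU_mul hcl hΦ hv hw, lact_lact hcl hw hv A⟩
  · rintro ⟨w, hw, rfl⟩
    obtain ⟨hvi, hv1, hv2⟩ := patternU_inv hΦ hcl hv
    refine ⟨v⁻¹ * w, patternU_mul hcl hΦ hvi hw, ?_⟩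
    rw [lact_lact hcl (patternU_mul hcl hΦ hvi hw) hv, ← Matrix.mul_assoc, hv1,
      Matrix.one_mul]

lemma rorb_lact {u : Matrix (Fin n) (Fin n) F} (hu : u ∈ patternU J)
    (B : Matrix (Fin n) (Fin n) F) :
    rorb J (lact J u B) = lact J u '' rorb J B := by
  ext C
  constructor
  · rintro ⟨w, hw, rfl⟩
    exact ⟨ract J w B, ⟨w, hw, rfl⟩, lact_ract_comm hcl hu hw B⟩
  · rintro ⟨D, ⟨w, hw, rfl⟩, rfl⟩
    exact ⟨w, hw, lact_ract_comm hcl hu hw B⟩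

lemma lorb_ract {u : Matrix (Fin n) (Fin n) F} (hu : u ∈ patternU J)
    (B : Matrix (Fin n) (Fin n) F) :
    lorb J (ract J u B) = ract J u '' lorb J B := by
  ext C
  constructor
  · rintro ⟨w, hw, rfl⟩
    exact ⟨lact J w B, ⟨w, hw, rfl⟩, (lact_ract_comm hcl hw hu B).symm⟩
  · rintro ⟨D, ⟨w, hw, rfl⟩, rfl⟩
    exact ⟨w, hw, (lact_ract_comm hcl hw hu B).symm⟩

include hA in
lemma rorb_subset_biorb {B : Matrix (Fin n) (Fin n) F} (hB : B ∈ biorb J A) :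
    rorb J B ⊆ biorb J A := by
  obtain ⟨u, hu, v, hv, rfl⟩ := hB
  rintro C ⟨w, hw, rfl⟩
  rw [← lact_ract_comm hcl hu hw, ract_ract hcl hw hv]
  exact ⟨u, hu, w * v, patternU_mul hcl hΦ hw hv, rfl⟩

include hA in
lemma lorb_subset_biorb {B : Matrix (Fin n) (Fin n) F} (hB : B ∈ biorb J A) :
    lorb J B ⊆ biorb J A := by
  obtain ⟨u, hu, v, hv, rfl⟩ := hB
  rintro C ⟨w, hw, rfl⟩
  rw [lact_lact hcl hw hu]
  exact ⟨u * w, patternU_mul hcl hΦ hu hw, v, hv, rfl⟩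

include hA in
lemma lorb_subset_biorb_self : lorb J A ⊆ biorb J A := by
  rintro C ⟨w, hw, rfl⟩
  exact ⟨w, hw, 1, patternU_one, by rw [ract_one hA]⟩

lemma biorb_subset_V : biorb J A ⊆ patternV J := by
  rintro C ⟨u, hu, v, hv, rfl⟩; exact lact_mem _ _

end Orb
section Rank
variable {J : Set (Fin n × Fin n)}

lemma ncard_range_mulVec_transpose {E : Type} [Fintype E] [DecidableEq E] (G : Matrix E E F) :
    (Set.range fun x => G.mulVec x).ncard = (Set.range fun x => Gᵀ.mulVec x).ncard := by
  have h1 : (Set.range fun x => G.mulVec x) = ↑(LinearMap.range G.mulVecLin) := by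
    rw [LinearMap.coe_range]; rfl
  have h2 : (Set.range fun x => Gᵀ.mulVec x) = ↑(LinearMap.range Gᵀ.mulVecLin) := by
    rw [LinearMap.coe_range]; rfl
  rw [h1, h2, ← Nat.card_coe_set_eq, ← Nat.card_coe_set_eq]
  have e1 : G.rank = Module.finrank F (LinearMap.range G.mulVecLin) := rfl
  have e2 : Gᵀ.rank = Module.finrank F (LinearMap.range Gᵀ.mulVecLin) := rfl
  have hrank : Module.finrank F ↥(LinearMap.range G.mulVecLin) =
      Module.finrank F ↥(LinearMap.range Gᵀ.mulVecLin) := by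
    rw [← e1, ← e2, Matrix.rank_transpose]
  obtain ⟨eqv⟩ := FiniteDimensional.nonempty_linearEquiv_of_finrank_eq hrank
  exact Nat.card_congr eqv.toEquiv

variable (hΦ : ∀ p ∈ J, p.1 < p.2)
    (hcl : ∀ i j k : Fin n, (i, j) ∈ J → (j, k) ∈ J → (i, k) ∈ J)
    {A : Matrix (Fin n) (Fin n) F} (hA : A ∈ patternV J)

include hΦ hcl hA in
lemma ncard_rorb_eq_ncard_lorb : (rorb J A).ncard = (lorb J A).ncard := by
  classical
  set Tr : Matrix (Fin n) (Fin n) F → Matrix (Fin n) (Fin n) F :=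
    fun X => projJ J (A * (projJ J X)ᵀ) with hTr
  set Tl : Matrix (Fin n) (Fin n) F → Matrix (Fin n) (Fin n) F :=
    fun X => projJ J ((projJ J X)ᵀ * A) with hTl
  set eFun : Matrix (Fin n) (Fin n) F → ((Fin n × Fin n) → F) :=
    fun X p => X p.1 p.2 with heFun
  have eInj : Function.Injective eFun := by
    intro X Y h
    ext i j
    exact congrFun h (i, j)
  have eSurj : Function.Surjective eFun := by
    intro y
    exact ⟨Matrix.of fun i j => y (i, j), rfl⟩
  set G : Matrix (Fin n × Fin n) (Fin n × Fin n) F :=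
    Matrix.of fun p q =>
      if (p.1, p.2) ∈ J ∧ q.1 = p.2 ∧ (q.1, q.2) ∈ J then A p.1 q.2 else 0 with hG
  -- key identities
  have key_r : ∀ X, eFun (Tr X) = G.mulVec (eFun X) := by
    intro X
    funext p
    obtain ⟨i, j⟩ := p
    show projJ J (A * (projJ J X)ᵀ) i j = _
    rw [Matrix.mulVec, dotProduct, Fintype.sum_prod_type]
    by_cases hij : (i, j) ∈ J
    · simp only [projJ_apply, hij, if_true, Matrix.mul_apply, Matrix.transpose_apply]
      symm
      rw [Finset.sum_eq_single j]
      · apply Finset.sum_congr rfl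
        intro b _
        by_cases hb : (j, b) ∈ J
        · simp [hG, hij, hb, heFun, mul_comm]
        · simp [hG, hij, hb, heFun]
      · intro a _ ha
        apply Finset.sum_eq_zero
        intro b _
        simp [hG, ha, heFun]
      · intro h; exact absurd (Finset.mem_univ j) h
    · simp only [projJ_apply, hij, if_false]
      symm
      apply Finset.sum_eq_zero; intro a _
      apply Finset.sum_eq_zero; intro b _
      simp [hG, hij]
  have key_l : ∀ X, eFun (Tl X) = Gᵀ.mulVec (eFun X) := by
    intro X
    funext p
    obtain ⟨i, j⟩ := p
    show projJ J ((projJ J X)ᵀ * A) i j = _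
    rw [Matrix.mulVec, dotProduct, Fintype.sum_prod_type]
    by_cases hij : (i, j) ∈ J
    · simp only [projJ_apply, hij, if_true, Matrix.mul_apply, Matrix.transpose_apply]
      have : ∀ a : Fin n, ∑ b, Gᵀ (i, j) (a, b) * eFun X (a, b) =
          (if (a, i) ∈ J then X a i else 0) * A a j := by
        intro a
        rw [Finset.sum_eq_single i]
        · by_cases hb : (a, i) ∈ J
          · simp [hG, hij, hb, heFun, mul_comm]
          · simp [hG, hij, hb, heFun]
        · intro b _ hb
          simp [hG, Ne.symm hb, heFun]
        · intro h; exact absurd (Finset.mem_univ i) h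
      symm
      exact Finset.sum_congr rfl (fun a _ => this a)
    · simp only [projJ_apply, hij, if_false]
      symm
      apply Finset.sum_eq_zero; intro a _
      apply Finset.sum_eq_zero; intro b _
      simp [hG, hij]
  -- orbit = coset of range
  have horbr : rorb J A = (fun C => A + C) '' Set.range Tr := by
    ext C
    constructor
    · rintro ⟨u, hu, rfl⟩
      have hN : u - 1 ∈ patternV J := patternU_sub_one hu
      refine ⟨Tr (u - 1), ⟨u - 1, rfl⟩, ?_⟩
      show A + projJ J (A * (projJ J (u - 1))ᵀ) = ract J u A
      rw [projJ_of_mem J hN, ract]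
      have hm : A * uᵀ = A + A * (u - 1)ᵀ := by
        rw [Matrix.transpose_sub, Matrix.transpose_one, Matrix.mul_sub, Matrix.mul_one]
        abel
      rw [hm, projJ_add, projJ_of_mem J hA]
    · rintro ⟨C, ⟨X, rfl⟩, rfl⟩
      set N := projJ J X with hNdef
      have hN : N ∈ patternV J := projJ_mem J X
      refine ⟨1 + N, patternV_add_one hΦ hN, ?_⟩
      show A + projJ J (A * Nᵀ) = ract J (1 + N) A
      rw [ract, Matrix.transpose_add, Matrix.mul_add, projJ_add, Matrix.transpose_one,
        Matrix.mul_one, projJ_of_mem J hA]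
  have horbl : lorb J A = (fun C => A + C) '' Set.range Tl := by
    ext C
    constructor
    · rintro ⟨u, hu, rfl⟩
      have hN : u - 1 ∈ patternV J := patternU_sub_one hu
      refine ⟨Tl (u - 1), ⟨u - 1, rfl⟩, ?_⟩
      show A + projJ J ((projJ J (u - 1))ᵀ * A) = lact J u A
      rw [projJ_of_mem J hN, lact]
      have hm : uᵀ * A = A + (u - 1)ᵀ * A := by
        rw [Matrix.transpose_sub, Matrix.transpose_one, Matrix.sub_mul, Matrix.one_mul]
        abel
      rw [hm, projJ_add, projJ_of_mem J hA]
    · rintro ⟨C, ⟨X, rfl⟩, rfl⟩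
      set N := projJ J X with hNdef
      have hN : N ∈ patternV J := projJ_mem J X
      refine ⟨1 + N, patternV_add_one hΦ hN, ?_⟩
      show A + projJ J (Nᵀ * A) = lact J (1 + N) A
      rw [lact, Matrix.transpose_add, Matrix.add_mul, projJ_add, Matrix.transpose_one,
        Matrix.one_mul, projJ_of_mem J hA]
  have himr : eFun '' Set.range Tr = Set.range fun x => G.mulVec x := by
    ext y
    constructor
    · rintro ⟨C, ⟨X, rfl⟩, rfl⟩
      exact ⟨eFun X, (key_r X).symm⟩
    · rintro ⟨x, rfl⟩
      obtain ⟨X, rfl⟩ := eSurj x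
      exact ⟨Tr X, ⟨X, rfl⟩, key_r X⟩
  have himl : eFun '' Set.range Tl = Set.range fun x => Gᵀ.mulVec x := by
    ext y
    constructor
    · rintro ⟨C, ⟨X, rfl⟩, rfl⟩
      exact ⟨eFun X, (key_l X).symm⟩
    · rintro ⟨x, rfl⟩
      obtain ⟨X, rfl⟩ := eSurj x
      exact ⟨Tl X, ⟨X, rfl⟩, key_l X⟩
  calc (rorb J A).ncard = ((fun C => A + C) '' Set.range Tr).ncard := by rw [horbr]
    _ = (Set.range Tr).ncard := Set.ncard_image_of_injective _ (add_right_injective A)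
    _ = (eFun '' Set.range Tr).ncard := (Set.ncard_image_of_injective _ eInj).symm
    _ = (Set.range fun x => G.mulVec x).ncard := by rw [himr]
    _ = (Set.range fun x => Gᵀ.mulVec x).ncard := ncard_range_mulVec_transpose G
    _ = (eFun '' Set.range Tl).ncard := by rw [himl]
    _ = (Set.range Tl).ncard := Set.ncard_image_of_injective _ eInj
    _ = ((fun C => A + C) '' Set.range Tl).ncard :=
        (Set.ncard_image_of_injective _ (add_right_injective A)).symm
    _ = (lorb J A).ncard := by rw [horbl]

end Rank
section Count
variable {α : Type} [Fintype α] {M : Type} [AddCommMonoid M]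

lemma finsum_ones (S : Set α) : ∑ᶠ b ∈ S, (1 : ℕ) = S.ncard := by
  rw [finsum_mem_eq_finite_toFinset_sum _ S.toFinite, Set.ncard_eq_toFinset_card _ S.toFinite]
  simp

lemma class_sum (S : Set α) (r : α → α → Prop)
    (hrefl : ∀ a ∈ S, r a a)
    (hsymm : ∀ a ∈ S, ∀ b ∈ S, r a b → r b a)
    (htrans : ∀ a ∈ S, ∀ b ∈ S, ∀ c ∈ S, r a b → r b c → r a c)
    (f : α → M) (v : M)
    (hclass : ∀ a ∈ S, ∑ᶠ b ∈ {x | x ∈ S ∧ r a x}, f b = v) :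
    ∑ᶠ b ∈ S, f b = Nat.card (Quot (fun B C : ↥S => r ↑B ↑C)) • v := by
  classical
  set rs : ↥S → ↥S → Prop := fun B C => r ↑B ↑C with hrs
  have hequiv : Equivalence rs :=
    ⟨fun a => hrefl _ a.2, fun {a b} h => hsymm _ a.2 _ b.2 h,
      fun {a b c} h1 h2 => htrans _ a.2 _ b.2 _ c.2 h1 h2⟩
  have hfin : Finite (Quot rs) := Finite.of_surjective (Quot.mk rs) Quot.mk_surjective
  letI : Fintype (Quot rs) := Fintype.ofFinite _
  have h1 : ∑ᶠ b ∈ S, f b = ∑ b : ↥S, f ↑b := by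
    rw [finsum_mem_eq_finite_toFinset_sum _ S.toFinite]
    rw [Finset.sum_subtype (S.toFinite.toFinset) (fun x => S.toFinite.mem_toFinset)
      (fun x => f x)]
  rw [h1, ← Fintype.sum_fiberwise (Quot.mk rs) (fun b : ↥S => f ↑b)]
  have hfib : ∀ q : Quot rs, (∑ i : {i : ↥S // Quot.mk rs i = q}, f ↑↑i) = v := by
    intro q
    induction q using Quot.ind with
    | _ a =>
      have hiff : ∀ b : ↥S, Quot.mk rs b = Quot.mk rs a ↔ r ↑a ↑b := by
        intro b
        rw [Quot.eq]
        constructor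
        · intro h; exact hequiv.symm ((Equivalence.eqvGen_iff hequiv).mp h)
        · intro h; exact (Equivalence.eqvGen_iff hequiv).mpr (hequiv.symm h)
      rw [← hclass ↑a a.2]
      rw [finsum_mem_eq_finite_toFinset_sum _ (Set.toFinite _)]
      rw [Finset.sum_subtype ((Set.toFinite _).toFinset)
        (fun x => (Set.toFinite {x | x ∈ S ∧ r ↑a x}).mem_toFinset) (fun x => f x)]
      let e : {i : ↥S // Quot.mk rs i = Quot.mk rs a} ≃ {x : α // x ∈ S ∧ r ↑a x} :=
        { toFun := fun i => ⟨i.1.1, ⟨i.1.2, (hiff i.1).mp i.2⟩⟩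
          invFun := fun x => ⟨⟨x.1, x.2.1⟩, (hiff ⟨x.1, x.2.1⟩).mpr x.2.2⟩
          left_inv := fun i => by apply Subtype.ext; apply Subtype.ext; rfl
          right_inv := fun x => by apply Subtype.ext; rfl }
      exact Fintype.sum_equiv e _ _ (fun i => rfl)
  calc ∑ q : Quot rs, (∑ i : {i : ↥S // Quot.mk rs i = q}, f ↑↑i)
      = ∑ _q : Quot rs, v := Finset.sum_congr rfl (fun q _ => hfib q)
    _ = (Finset.univ : Finset (Quot rs)).card • v := Finset.sum_const v
    _ = Nat.card (Quot rs) • v := by rw [Finset.card_univ, Nat.card_eq_fintype_card]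

lemma card_pairs_fst {β : Type} [Fintype β] (T : Set (α × β)) (S : Set α) (c : ℕ)
    (h1 : ∀ p ∈ T, p.1 ∈ S)
    (h2 : ∀ a ∈ S, {b | (a, b) ∈ T}.ncard = c) :
    T.ncard = S.ncard * c := by
  classical
  rw [Set.ncard_eq_toFinset_card _ T.toFinite, Set.ncard_eq_toFinset_card _ S.toFinite]
  rw [Finset.card_eq_sum_card_fiberwise (f := Prod.fst) (t := S.toFinite.toFinset)
    (fun x hx => S.toFinite.mem_toFinset.mpr (h1 x (T.toFinite.mem_toFinset.mp hx)))]
  rw [Finset.sum_congr rfl (fun a ha => ?_), Finset.sum_const, smul_eq_mul]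
  have haS : a ∈ S := S.toFinite.mem_toFinset.mp ha
  rw [← h2 a haS, Set.ncard_eq_toFinset_card _ (Set.toFinite _)]
  refine Finset.card_bij' (fun p _ => p.2) (fun b _ => (a, b)) ?_ ?_ ?_ ?_
  · intro p hp
    have hpf := Finset.mem_filter.mp hp
    apply (Set.toFinite _).mem_toFinset.mpr
    have h3 : p.1 = a := hpf.2
    have h4 : p ∈ T := T.toFinite.mem_toFinset.mp hpf.1
    show (a, p.2) ∈ T
    rwa [← h3, Prod.mk.eta]
  · intro b hb
    apply Finset.mem_filter.mpr
    exact ⟨T.toFinite.mem_toFinset.mpr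
      ((Set.toFinite {b | (a, b) ∈ T}).mem_toFinset.mp hb), rfl⟩
  · intro p hp
    have h3 : p.1 = a := (Finset.mem_filter.mp hp).2
    exact Prod.ext h3.symm rfl
  · intro b _
    rfl

lemma card_pairs_snd {β : Type} [Fintype β] (T : Set (α × β)) (S : Set β) (c : ℕ)
    (h1 : ∀ p ∈ T, p.2 ∈ S)
    (h2 : ∀ b ∈ S, {a | (a, b) ∈ T}.ncard = c) :
    T.ncard = S.ncard * c := by
  classical
  have hswap : (Prod.swap '' T).ncard = T.ncard :=
    Set.ncard_image_of_injective _ Prod.swap_injective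
  rw [← hswap]
  apply card_pairs_fst (Prod.swap '' T) S c
  · rintro p ⟨q, hq, rfl⟩
    exact h1 q hq
  · intro b hb
    rw [← h2 b hb]
    congr 1
    ext a
    constructor
    · rintro ⟨q, hq, hq2⟩
      have hqe : q = (a, b) := by
        have h5 := congrArg Prod.swap hq2
        rw [Prod.swap_swap] at h5
        simpa using h5
      rwa [hqe] at hq
    · intro ha
      exact ⟨(a, b), ha, rfl⟩

end Count
section Char
variable {J : Set (Fin n × Fin n)}

lemma dpair_add_left (X Y D : Matrix (Fin n) (Fin n) F) :
    dpair (X + Y) D = dpair X D + dpair Y D := by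
  unfold dpair
  rw [← Finset.sum_add_distrib]
  apply Finset.sum_congr rfl; intro i _
  rw [← Finset.sum_add_distrib]
  apply Finset.sum_congr rfl; intro j _
  simp [add_mul]

lemma dpair_proj_left {D : Matrix (Fin n) (Fin n) F} (hD : D ∈ patternV J)
    (X : Matrix (Fin n) (Fin n) F) : dpair (projJ J X) D = dpair X D := by
  unfold dpair
  apply Finset.sum_congr rfl; intro i _
  apply Finset.sum_congr rfl; intro j _
  by_cases h : (i, j) ∈ J
  · rw [projJ_apply, if_pos h]
  · rw [hD i j h, mul_zero, mul_zero]

lemma dpair_proj_right {N : Matrix (Fin n) (Fin n) F} (hN : N ∈ patternV J)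
    (X : Matrix (Fin n) (Fin n) F) : dpair N (projJ J X) = dpair N X := by
  unfold dpair
  apply Finset.sum_congr rfl; intro i _
  apply Finset.sum_congr rfl; intro j _
  by_cases h : (i, j) ∈ J
  · rw [projJ_apply, if_pos h]
  · rw [hN i j h, zero_mul, zero_mul]

lemma dpair_zero_right (N : Matrix (Fin n) (Fin n) F) : dpair N 0 = 0 := by
  unfold dpair; simp

lemma dpair_shuffle (N C D : Matrix (Fin n) (Fin n) F) :
    dpair (Nᵀ * C) D = dpair N (C * Dᵀ) := by
  unfold dpair
  simp only [Matrix.mul_apply, Matrix.transpose_apply, Finset.sum_mul, Finset.mul_sum]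
  have hL : ∀ i : Fin n, (∑ j, ∑ k, N k i * C k j * D i j)
      = ∑ k, ∑ j, N k i * C k j * D i j := fun i => Finset.sum_comm
  rw [Finset.sum_congr rfl (fun i _ => hL i), Finset.sum_comm]
  apply Finset.sum_congr rfl; intro k _
  apply Finset.sum_congr rfl; intro i _
  apply Finset.sum_congr rfl; intro j _
  ring

variable (hΦ : ∀ p ∈ J, p.1 < p.2)
    (hcl : ∀ i j k : Fin n, (i, j) ∈ J → (j, k) ∈ J → (i, k) ∈ J)

include hΦ hcl in
lemma dpair_lact_fixed {u g C : Matrix (Fin n) (Fin n) F} (hu : u ∈ patternU J)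
    (hg : g ∈ patternU J) (hC : C ∈ patternV J)
    (hfix : projJ J (C * (g⁻¹)ᵀ) = C) :
    dpair (lact J u C) (g⁻¹ - 1) = dpair C (g⁻¹ - 1) := by
  obtain ⟨hgi, hg1, hg2⟩ := patternU_inv hΦ hcl hg
  set D : Matrix (Fin n) (Fin n) F := g⁻¹ - 1 with hD
  have hDV : D ∈ patternV J := patternU_sub_one hgi
  have hCD : projJ J (C * Dᵀ) = 0 := by
    have h0 : C * Dᵀ = C * (g⁻¹)ᵀ - C := by
      rw [hD, Matrix.transpose_sub, Matrix.transpose_one, Matrix.mul_sub, Matrix.mul_one]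
    rw [h0, projJ_sub, hfix, projJ_of_mem J hC, sub_self]
  have h1 : dpair (lact J u C) D = dpair (uᵀ * C) D := dpair_proj_left hDV _
  have h2 : uᵀ * C = C + (u - 1)ᵀ * C := by
    rw [Matrix.transpose_sub, Matrix.transpose_one, Matrix.sub_mul, Matrix.one_mul]
    abel
  have h3 : dpair ((u - 1)ᵀ * C) D = 0 := by
    rw [dpair_shuffle, ← dpair_proj_right (patternU_sub_one hu), hCD, dpair_zero_right]
  rw [h1, h2, dpair_add_left, h3, add_zero]

include hΦ hcl in
lemma fixed_lact_iff {u g C : Matrix (Fin n) (Fin n) F} (hu : u ∈ patternU J)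
    (hg : g ∈ patternU J) (hC : C ∈ patternV J) :
    projJ J ((lact J u C) * (g⁻¹)ᵀ) = lact J u C ↔ projJ J (C * (g⁻¹)ᵀ) = C := by
  obtain ⟨hgi, hg1, hg2⟩ := patternU_inv hΦ hcl hg
  have h1 : projJ J ((lact J u C) * (g⁻¹)ᵀ) = lact J u (ract J g⁻¹ C) := by
    rw [lact_ract_comm hcl hu hgi C]; rfl
  rw [h1]
  constructor
  · intro h
    exact lact_injOn hΦ hcl hu (ract_mem _ _) hC h
  · intro h
    show lact J u (ract J g⁻¹ C) = lact J u C
    rw [show ract J g⁻¹ C = projJ J (C * (g⁻¹)ᵀ) from rfl, h]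

end Char

/-- For J ⊆ Φ⁺ closed and A ∈ V_J: |O_A^r| = |O_A^l|; the numbers of right
and of left U_J-orbits contained in O_A^bi coincide; there exists κ ∈ ℕ with
ℂO_A^bi ≅ (ℂO_A^r)^{⊕κ} as right ℂU_J-modules (expressed on characters) and
κ·|O_A^r ∩ O_A^l| = |O_A^r|; and |O_A^bi|·|O_A^r ∩ O_A^l| = |O_A^r|·|O_A^l| = |O_A^r|². -/
theorem stmt_13 {F : Type} [Field F] [Fintype F] {n : ℕ}
    (J : Set (Fin n × Fin n))
    (hΦ : ∀ p ∈ J, p.1 < p.2)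
    (hcl : ∀ i j k : Fin n, (i, j) ∈ J → (j, k) ∈ J → (i, k) ∈ J)
    (θ : AddChar F ℂ) (hθ : θ ≠ 1)
    (A : Matrix (Fin n) (Fin n) F) (hA : A ∈ patternV J) :
    Nat.card ↥(orbR J A) = Nat.card ↥(orbL J A) ∧
    Nat.card (Quot (fun B C : ↥(orbBi J A) =>
        ∃ u ∈ patternU J,
          projJ J ((B : Matrix (Fin n) (Fin n) F) * (u⁻¹)ᵀ) = (C : Matrix (Fin n) (Fin n) F))) =
      Nat.card (Quot (fun B C : ↥(orbBi J A) =>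
        ∃ u ∈ patternU J,
          projJ J ((u⁻¹)ᵀ * (B : Matrix (Fin n) (Fin n) F)) = (C : Matrix (Fin n) (Fin n) F))) ∧
    (∃ κ : ℕ,
        (∀ g ∈ patternU J, bcharFn J θ A g = (κ : ℂ) * rcharFn J θ A g) ∧
        κ * Nat.card ↥(orbR J A ∩ orbL J A) = Nat.card ↥(orbR J A)) ∧
    Nat.card ↥(orbBi J A) * Nat.card ↥(orbR J A ∩ orbL J A) =
        Nat.card ↥(orbR J A) * Nat.card ↥(orbL J A) ∧
    Nat.card ↥(orbBi J A) * Nat.card ↥(orbR J A ∩ orbL J A) =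
        Nat.card ↥(orbR J A) * Nat.card ↥(orbR J A) := by
  classical
  have hOr : orbR J A = rorb J A := orbR_eq hΦ hcl A
  have hOl : orbL J A = lorb J A := orbL_eq hΦ hcl A
  have hOb : orbBi J A = biorb J A := orbBi_eq hΦ hcl A
  set nr := (rorb J A).ncard with hnr
  set nl := (lorb J A).ncard with hnl
  set nb := (biorb J A).ncard with hnb
  set ni := (rorb J A ∩ lorb J A).ncard with hni
  have hnrl : nr = nl := ncard_rorb_eq_ncard_lorb hΦ hcl hA
  -- relation iffs
  have hriff : ∀ a x : Matrix (Fin n) (Fin n) F,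
      (∃ u ∈ patternU J, projJ J (a * (u⁻¹)ᵀ) = x) ↔ x ∈ rorb J a := by
    intro a x
    constructor
    · rintro ⟨u, hu, h⟩
      exact ⟨u⁻¹, (patternU_inv hΦ hcl hu).1, h.symm⟩
    · rintro ⟨w, hw, rfl⟩
      obtain ⟨hwi, hw1, _⟩ := patternU_inv hΦ hcl hw
      refine ⟨w⁻¹, hwi, ?_⟩
      rw [Matrix.inv_eq_right_inv (mul_eq_one_comm.mpr hw1)]
      rfl
  have hliff : ∀ a x : Matrix (Fin n) (Fin n) F,
      (∃ u ∈ patternU J, projJ J ((u⁻¹)ᵀ * a) = x) ↔ x ∈ lorb J a := by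
    intro a x
    constructor
    · rintro ⟨u, hu, h⟩
      exact ⟨u⁻¹, (patternU_inv hΦ hcl hu).1, h.symm⟩
    · rintro ⟨w, hw, rfl⟩
      obtain ⟨hwi, hw1, _⟩ := patternU_inv hΦ hcl hw
      refine ⟨w⁻¹, hwi, ?_⟩
      rw [Matrix.inv_eq_right_inv (mul_eq_one_comm.mpr hw1)]
      rfl
  -- symmetry and transitivity of orbit relations
  have hrsymm : ∀ a ∈ (patternV J : Set (Matrix (Fin n) (Fin n) F)), ∀ b, b ∈ rorb J a → a ∈ rorb J b := by
    rintro a ha b ⟨w, hw, rfl⟩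
    exact ⟨w⁻¹, (patternU_inv hΦ hcl hw).1, (ract_cancel hΦ hcl hw ha).symm⟩
  have hlsymm : ∀ a ∈ (patternV J : Set (Matrix (Fin n) (Fin n) F)), ∀ b, b ∈ lorb J a → a ∈ lorb J b := by
    rintro a ha b ⟨w, hw, rfl⟩
    exact ⟨w⁻¹, (patternU_inv hΦ hcl hw).1, (lact_cancel hΦ hcl hw ha).symm⟩
  have hrtrans : ∀ a b c : Matrix (Fin n) (Fin n) F,
      b ∈ rorb J a → c ∈ rorb J b → c ∈ rorb J a := by
    rintro a b c ⟨w, hw, rfl⟩ ⟨w', hw', rfl⟩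
    exact ⟨w' * w, patternU_mul hcl hΦ hw' hw, ract_ract hcl hw' hw a⟩
  have hltrans : ∀ a b c : Matrix (Fin n) (Fin n) F,
      b ∈ lorb J a → c ∈ lorb J b → c ∈ lorb J a := by
    rintro a b c ⟨w, hw, rfl⟩ ⟨w', hw', rfl⟩
    exact ⟨w * w', patternU_mul hcl hΦ hw hw', lact_lact hcl hw' hw a⟩
  -- class sets and their cards
  have hbV : ∀ a ∈ biorb J A, a ∈ patternV J := fun a ha => biorb_subset_V hΦ hcl ha
  have hclassR : ∀ a ∈ biorb J A,
      {x | x ∈ orbBi J A ∧ x ∈ rorb J a} = rorb J a := by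
    intro a ha
    ext x
    constructor
    · rintro ⟨_, hx⟩; exact hx
    · intro hx
      exact ⟨hOb ▸ rorb_subset_biorb hΦ hcl hA ha hx, hx⟩
  have hclassL : ∀ a ∈ biorb J A,
      {x | x ∈ orbBi J A ∧ x ∈ lorb J a} = lorb J a := by
    intro a ha
    ext x
    constructor
    · rintro ⟨_, hx⟩; exact hx
    · intro hx
      exact ⟨hOb ▸ lorb_subset_biorb hΦ hcl hA ha hx, hx⟩
  have hrorb_card : ∀ a ∈ biorb J A, (rorb J a).ncard = nr := by
    rintro a ⟨u, hu, v, hv, rfl⟩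
    rw [rorb_lact hΦ hcl hu, rorb_ract hΦ hcl hA hv]
    exact Set.ncard_image_of_injOn ((lact_injOn hΦ hcl hu).mono (rorb_subset_V hΦ hcl A))
  have hlorb_card : ∀ a ∈ biorb J A, (lorb J a).ncard = nl := by
    rintro a ⟨u, hu, v, hv, rfl⟩
    rw [lact_ract_comm hcl hu hv, lorb_ract hΦ hcl hv, lorb_lact hΦ hcl hA hu]
    exact Set.ncard_image_of_injOn ((ract_injOn hΦ hcl hv).mono (lorb_subset_V hΦ hcl A))
  -- counting right and left classes in the biorbit
  have hcount_r := class_sum (orbBi J A)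
    (fun B C => ∃ u ∈ patternU J, projJ J (B * (u⁻¹)ᵀ) = C)
    (fun a ha => (hriff a a).mpr (mem_rorb_self hΦ hcl (hbV a (hOb ▸ ha))))
    (fun a ha b _ h => (hriff b a).mpr
      (hrsymm a (hbV a (hOb ▸ ha)) b ((hriff a b).mp h)))
    (fun a _ b _ c _ h1 h2 => (hriff a c).mpr
      (hrtrans a b c ((hriff a b).mp h1) ((hriff b c).mp h2)))
    (fun _ => (1 : ℕ)) nr
    (by
      intro a ha
      have ha' : a ∈ biorb J A := hOb ▸ ha
      have hseteq : {x | x ∈ orbBi J A ∧ ∃ u ∈ patternU J, projJ J (a * (u⁻¹)ᵀ) = x}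
          = rorb J a := by
        rw [← hclassR a ha']
        ext x
        exact and_congr_right (fun _ => hriff a x)
      rw [hseteq, finsum_ones, hrorb_card a ha'])
  have hcount_l := class_sum (orbBi J A)
    (fun B C => ∃ u ∈ patternU J, projJ J ((u⁻¹)ᵀ * B) = C)
    (fun a ha => (hliff a a).mpr (mem_lorb_self hΦ hcl (hbV a (hOb ▸ ha))))
    (fun a ha b _ h => (hliff b a).mpr
      (hlsymm a (hbV a (hOb ▸ ha)) b ((hliff a b).mp h)))
    (fun a _ b _ c _ h1 h2 => (hliff a c).mpr
      (hltrans a b c ((hliff a b).mp h1) ((hliff b c).mp h2)))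
    (fun _ => (1 : ℕ)) nl
    (by
      intro a ha
      have ha' : a ∈ biorb J A := hOb ▸ ha
      have hseteq : {x | x ∈ orbBi J A ∧ ∃ u ∈ patternU J, projJ J ((u⁻¹)ᵀ * a) = x}
          = lorb J a := by
        rw [← hclassL a ha']
        ext x
        exact and_congr_right (fun _ => hliff a x)
      rw [hseteq, finsum_ones, hlorb_card a ha'])
  rw [finsum_ones] at hcount_r hcount_l
  set κr := Nat.card (Quot (fun B C : ↥(orbBi J A) =>
      ∃ u ∈ patternU J, projJ J ((B : Matrix (Fin n) (Fin n) F) * (u⁻¹)ᵀ)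
        = (C : Matrix (Fin n) (Fin n) F))) with hκr
  set κl := Nat.card (Quot (fun B C : ↥(orbBi J A) =>
      ∃ u ∈ patternU J, projJ J ((u⁻¹)ᵀ * (B : Matrix (Fin n) (Fin n) F))
        = (C : Matrix (Fin n) (Fin n) F))) with hκl
  have hcr : (orbBi J A).ncard = κr * nr := by rw [hcount_r, smul_eq_mul]
  have hcll : (orbBi J A).ncard = κl * nl := by rw [hcount_l, smul_eq_mul]
  -- the pairs set
  set TP : Set (Matrix (Fin n) (Fin n) F × Matrix (Fin n) (Fin n) F) :=
    {p | p.1 ∈ lorb J A ∧ p.2 ∈ rorb J p.1} with hTP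
  have hT1 : TP.ncard = nl * nr := by
    apply card_pairs_fst TP (lorb J A) nr (fun p hp => hp.1)
    intro a ha
    have hseteq : {b | (a, b) ∈ TP} = rorb J a := by
      ext b
      exact ⟨fun h => h.2, fun h => ⟨ha, h⟩⟩
    rw [hseteq]
    obtain ⟨u, hu, rfl⟩ := ha
    rw [rorb_lact hΦ hcl hu]
    exact Set.ncard_image_of_injOn ((lact_injOn hΦ hcl hu).mono (rorb_subset_V hΦ hcl A))
  have hT2 : TP.ncard = (biorb J A).ncard * ni := by
    apply card_pairs_snd TP (biorb J A) ni
    · intro p hp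
      exact rorb_subset_biorb hΦ hcl hA
        (lorb_subset_biorb_self hΦ hcl hA hp.1) hp.2
    · intro b hb
      have hbVb : b ∈ patternV J := hbV b hb
      have hseteq : {a | (a, b) ∈ TP} = lorb J A ∩ rorb J b := by
        ext a
        constructor
        · rintro ⟨h1, h2⟩
          exact ⟨h1, hrsymm a (lorb_subset_V hΦ hcl A h1) b h2⟩
        · rintro ⟨h1, h2⟩
          exact ⟨h1, hrsymm b hbVb a h2⟩
      rw [hseteq]
      obtain ⟨u, hu, v, hv, rfl⟩ := hb
      have hrb : rorb J (lact J u (ract J v A)) = lact J u '' rorb J A := by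
        rw [rorb_lact hΦ hcl hu, rorb_ract hΦ hcl hA hv]
      have hlimg : lact J u '' lorb J A = lorb J A := by
        ext C
        constructor
        · rintro ⟨D, ⟨w, hw, rfl⟩, rfl⟩
          exact ⟨w * u, patternU_mul hcl hΦ hw hu, lact_lact hcl hu hw A⟩
        · rintro ⟨w, hw, rfl⟩
          obtain ⟨hui, hu1, hu2⟩ := patternU_inv hΦ hcl hu
          refine ⟨lact J (w * u⁻¹) A, ⟨w * u⁻¹, patternU_mul hcl hΦ hw hui, rfl⟩, ?_⟩
          rw [lact_lact hcl hu (patternU_mul hcl hΦ hw hui), Matrix.mul_assoc, hu2,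
            Matrix.mul_one]
      have hinter : lorb J A ∩ rorb J (lact J u (ract J v A))
          = lact J u '' (lorb J A ∩ rorb J A) := by
        rw [(lact_injOn hΦ hcl hu).image_inter (lorb_subset_V hΦ hcl A)
          (rorb_subset_V hΦ hcl A), hlimg, ← hrb]
      rw [hinter, Set.ncard_image_of_injOn ((lact_injOn hΦ hcl hu).mono
        (fun x hx => lorb_subset_V hΦ hcl A hx.1)), Set.inter_comm]
  -- positivity
  have hnr_pos : 0 < nr := by
    rw [hnr]
    exact Set.ncard_pos (Set.toFinite _) |>.mpr ⟨A, mem_rorb_self hΦ hcl hA⟩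
  have hni_pos : 0 < ni := by
    rw [hni]
    exact Set.ncard_pos (Set.toFinite _) |>.mpr
      ⟨A, mem_rorb_self hΦ hcl hA, mem_lorb_self hΦ hcl hA⟩
  -- numeric consequences
  have hmain : (biorb J A).ncard * ni = nl * nr := by rw [← hT2, hT1]
  have hκr_ni : κr * ni = nr := by
    have h1 : nr * (κr * ni) = nr * nr := by
      calc nr * (κr * ni) = (κr * nr) * ni := by ring
        _ = (orbBi J A).ncard * ni := by rw [← hcr]
        _ = (biorb J A).ncard * ni := by rw [hOb]
        _ = nl * nr := hmain
        _ = nr * nr := by rw [← hnrl]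
    exact Nat.eq_of_mul_eq_mul_left hnr_pos h1
  have hκrl : κr = κl := by
    have h1 : κr * nr = κl * nr := by
      rw [← hcr, hcll, hnrl]
    exact Nat.eq_of_mul_eq_mul_right hnr_pos h1
  -- character identity
  have hchar : ∀ g ∈ patternU J, bcharFn J θ A g = (κr : ℂ) * rcharFn J θ A g := by
    intro g hg
    set f : Matrix (Fin n) (Fin n) F → ℂ :=
      fun B => if projJ J (B * (g⁻¹)ᵀ) = B then θ (dpair B (g⁻¹ - 1)) else 0 with hf
    have hb : bcharFn J θ A g = ∑ᶠ B ∈ orbBi J A, f B := rfl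
    have hr : rcharFn J θ A g = ∑ᶠ B ∈ orbR J A, f B := rfl
    have hfinv : ∀ u ∈ patternU J, ∀ C ∈ patternV J, f (lact J u C) = f C := by
      intro u hu C hC
      simp only [hf]
      by_cases hfix : projJ J (C * (g⁻¹)ᵀ) = C
      · rw [if_pos hfix, if_pos ((fixed_lact_iff hΦ hcl hu hg hC).mpr hfix),
          dpair_lact_fixed hΦ hcl hu hg hC hfix]
      · rw [if_neg hfix, if_neg (fun h => hfix ((fixed_lact_iff hΦ hcl hu hg hC).mp h))]
    have hclass : ∀ a ∈ orbBi J A,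
        ∑ᶠ x ∈ {x | x ∈ orbBi J A ∧
          ∃ u ∈ patternU J, projJ J (a * (u⁻¹)ᵀ) = x}, f x = rcharFn J θ A g := by
      intro a ha
      have ha' : a ∈ biorb J A := hOb ▸ ha
      have hseteq : {x | x ∈ orbBi J A ∧ ∃ u ∈ patternU J, projJ J (a * (u⁻¹)ᵀ) = x}
          = rorb J a := by
        rw [← hclassR a ha']
        ext x
        exact and_congr_right (fun _ => hriff a x)
      rw [hseteq]
      obtain ⟨u, hu, v, hv, rfl⟩ := ha'
      rw [rorb_lact hΦ hcl hu, rorb_ract hΦ hcl hA hv]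
      rw [finsum_mem_image ((lact_injOn hΦ hcl hu).mono (rorb_subset_V hΦ hcl A))]
      rw [hr, hOr]
      exact finsum_mem_congr rfl
        (fun C hC => hfinv u hu C (rorb_subset_V hΦ hcl A hC))
    have := class_sum (orbBi J A)
      (fun B C => ∃ u ∈ patternU J, projJ J (B * (u⁻¹)ᵀ) = C)
      (fun a ha => (hriff a a).mpr (mem_rorb_self hΦ hcl (hbV a (hOb ▸ ha))))
      (fun a ha b _ h => (hriff b a).mpr
        (hrsymm a (hbV a (hOb ▸ ha)) b ((hriff a b).mp h)))
      (fun a _ b _ c _ h1 h2 => (hriff a c).mpr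
        (hrtrans a b c ((hriff a b).mp h1) ((hriff b c).mp h2)))
      f (rcharFn J θ A g) hclass
    rw [hb, this, ← hκr]
    rw [nsmul_eq_mul]
  -- final assembly
  have hcard_r : Nat.card ↥(orbR J A) = nr := by
    rw [Nat.card_coe_set_eq, hOr]
  have hcard_l : Nat.card ↥(orbL J A) = nl := by
    rw [Nat.card_coe_set_eq, hOl]
  have hcard_b : Nat.card ↥(orbBi J A) = (biorb J A).ncard := by
    rw [Nat.card_coe_set_eq, hOb]
  have hcard_i : Nat.card ↥(orbR J A ∩ orbL J A) = ni := by
    rw [Nat.card_coe_set_eq, hOr, hOl]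
  refine ⟨?_, ?_, ⟨κr, hchar, ?_⟩, ?_, ?_⟩
  · rw [hcard_r, hcard_l, hnrl]
  · exact hκrl
  · rw [hcard_i, hcard_r]; exact hκr_ni
  · rw [hcard_b, hcard_i, hcard_r, hcard_l]
    calc (biorb J A).ncard * ni = nl * nr := hmain
      _ = nr * nl := mul_comm _ _
  · rw [hcard_b, hcard_i, hcard_r]
    calc (biorb J A).ncard * ni = nl * nr := hmain
      _ = nr * nr := by rw [hnrl]
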